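/- For a Blaschke product B(z) = e^{iθ} ∏_{k=1}^d (z - a_k)/(1 - conj(a_k) z) with all a_k in the open unit disk, and any λ on the unit circle, the equation B(z) = λ has exactly d distinct solutions, all lying on the unit circle. -/

import Mathlib

open Complex Finset Polynomial

theorem sq_diff' (z w : ℂ) : (‖z - w‖)^2 - (‖1 - (starRingEnd ℂ) w * z‖)^2
    = (‖z‖^2 - 1)*(1 - ‖w‖^2) := by
  simp only [Complex.sq_norm, Complex.normSq_apply, Complex.sub_re, Complex.sub_im,
    Complex.mul_re, Complex.mul_im, Complex.one_re, Complex.one_im, Complex.conj_re,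
    Complex.conj_im]
  ring

theorem prod_lt_aux (d : ℕ) (hd : 1 ≤ d) (u v : Fin d → ℝ) (h0 : ∀ k, 0 ≤ u k)
    (h : ∀ k, u k < v k) : ∏ k, u k < ∏ k, v k := by
  have hne : Nonempty (Fin d) := ⟨⟨0, hd⟩⟩
  by_cases h' : ∀ k, 0 < u k
  · exact Finset.prod_lt_prod_of_nonempty (fun k _ => h' k) (fun k _ => h k) univ_nonempty
  · push_neg at h'
    obtain ⟨k0, hk0⟩ := h'
    have hu0 : u k0 = 0 := le_antisymm hk0 (h0 k0)
    rw [Finset.prod_eq_zero (mem_univ k0) hu0]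
    exact Finset.prod_pos fun k _ => lt_of_le_of_lt (h0 k) (h k)

theorem root_abs_one (d : ℕ) (hd : 1 ≤ d) (a : Fin d → ℂ) (ha : ∀ k, ‖a k‖ < 1)
    (e lam z : ℂ) (he : ‖e‖ = 1) (hlam : ‖lam‖ = 1)
    (hroot : e * ∏ k, (z - a k) = lam * ∏ k, (1 - (starRingEnd ℂ) (a k) * z)) :
    ‖z‖ = 1 := by
  have habs : ∏ k, ‖z - a k‖ = ∏ k, ‖1 - (starRingEnd ℂ) (a k) * z‖ := by
    have := congrArg Norm.norm hroot
    rwa [norm_mul, norm_mul, norm_prod, norm_prod, he, hlam, one_mul, one_mul] at this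
  rcases lt_trichotomy (‖z‖) 1 with h | h | h
  · exfalso
    have hlt : ∀ k, ‖z - a k‖ < ‖1 - (starRingEnd ℂ) (a k) * z‖ := by
      intro k
      have h2 := sq_diff' z (a k)
      have hx : ‖z‖ ^ 2 - 1 < 0 := by nlinarith [norm_nonneg z]
      have hy : 0 < 1 - ‖a k‖ ^ 2 := by nlinarith [norm_nonneg (a k), ha k]
      have : (‖z - a k‖)^2 < (‖1 - (starRingEnd ℂ) (a k) * z‖)^2 := by
        nlinarith [mul_neg_of_neg_of_pos hx hy]
      exact lt_of_pow_lt_pow_left₀ 2 (norm_nonneg _) this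
    exact absurd habs (ne_of_lt (prod_lt_aux d hd _ _ (fun k => norm_nonneg _) hlt))
  · exact h
  · exfalso
    have hlt : ∀ k, ‖1 - (starRingEnd ℂ) (a k) * z‖ < ‖z - a k‖ := by
      intro k
      have h2 := sq_diff' z (a k)
      have hx : 0 < ‖z‖ ^ 2 - 1 := by nlinarith [norm_nonneg z]
      have hy : 0 < 1 - ‖a k‖ ^ 2 := by nlinarith [norm_nonneg (a k), ha k]
      have : (‖1 - (starRingEnd ℂ) (a k) * z‖)^2 < (‖z - a k‖)^2 := by
        nlinarith [mul_pos hx hy]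
      exact lt_of_pow_lt_pow_left₀ 2 (norm_nonneg _) this
    exact absurd habs (ne_of_gt (prod_lt_aux d hd _ _ (fun k => norm_nonneg _) hlt))

theorem gne_aux (z w : ℂ) (hz : ‖z‖ = 1) (hw : ‖w‖ < 1) :
    1 - (starRingEnd ℂ) w * z ≠ 0 := by
  intro h
  have h1 : (starRingEnd ℂ) w * z = 1 := by linear_combination -h
  have := congrArg Norm.norm h1
  rw [norm_mul, Complex.norm_conj, hz, mul_one, norm_one] at this
  exact absurd this (ne_of_lt hw)

theorem term_re_pos (z w : ℂ) (hz : ‖z‖ = 1) (hw : ‖w‖ < 1) (hf : z - w ≠ 0) :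
    0 < (z / (z - w) + (starRingEnd ℂ) w * z / (1 - (starRingEnd ℂ) w * z)).re := by
  have hz0 : z ≠ 0 := by
    intro h; rw [h] at hz; simp at hz
  have hnz : Complex.normSq z = 1 := by
    rw [Complex.normSq_eq_norm_sq, hz]; norm_num
  have hcf : (starRingEnd ℂ) (z - w) ≠ 0 := by
    rw [Ne, _root_.map_eq_zero]; exact hf
  have hg : 1 - (starRingEnd ℂ) w * z = z * (starRingEnd ℂ) (z - w) := by
    rw [map_sub]
    have : z * ((starRingEnd ℂ) z - (starRingEnd ℂ) w) = z * (starRingEnd ℂ) z - z * (starRingEnd ℂ) w := by ring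
    rw [this, Complex.mul_conj, hnz]; push_cast; ring
  have hnum : z * (starRingEnd ℂ) (z - w) + (starRingEnd ℂ) w * (z - w)
      = ((Complex.normSq z - Complex.normSq w : ℝ) : ℂ) := by
    rw [map_sub]
    have h1 : z * ((starRingEnd ℂ) z - (starRingEnd ℂ) w) + (starRingEnd ℂ) w * (z - w)
        = z * (starRingEnd ℂ) z - w * (starRingEnd ℂ) w := by ring
    rw [h1, Complex.mul_conj, Complex.mul_conj]; push_cast; ring
  have key : ∀ c : ℂ, c ≠ 0 → z / (z - w) + (starRingEnd ℂ) w * z / (z * c)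
      = (z * c + (starRingEnd ℂ) w * (z - w)) / ((z - w) * c) := by
    intro c hc
    field_simp
  rw [hg, key _ hcf, hnum, Complex.mul_conj, ← Complex.ofReal_div, Complex.ofReal_re]
  apply div_pos
  · have : Complex.normSq w < 1 := by
      rw [Complex.normSq_eq_norm_sq]
      nlinarith [norm_nonneg w]
    linarith
  · exact Complex.normSq_pos.mpr hf

theorem key_sum_ne (d : ℕ) (hd : 1 ≤ d) (a : Fin d → ℂ) (ha : ∀ k, ‖a k‖ < 1)
    (e lam z : ℂ) (he : e ≠ 0) (hlam : lam ≠ 0) (hz : ‖z‖ = 1)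
    (hroot : e * ∏ k, (z - a k) = lam * ∏ k, (1 - (starRingEnd ℂ) (a k) * z)) :
    e * ∑ j, ∏ k ∈ univ.erase j, (z - a k)
      + lam * ∑ j, (∏ k ∈ univ.erase j, (1 - (starRingEnd ℂ) (a k) * z)) * (starRingEnd ℂ) (a j) ≠ 0 := by
  have hne : Nonempty (Fin d) := ⟨⟨0, hd⟩⟩
  have hz0 : z ≠ 0 := by intro h; rw [h] at hz; simp at hz
  have hgne : ∀ k, (1 - (starRingEnd ℂ) (a k) * z) ≠ 0 := fun k => gne_aux z (a k) hz (ha k)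
  have hDne : (∏ k, (1 - (starRingEnd ℂ) (a k) * z)) ≠ 0 :=
    prod_ne_zero_iff.mpr fun k _ => hgne k
  have hNne : (∏ k, (z - a k)) ≠ 0 := by
    intro h
    rw [h, mul_zero] at hroot
    exact mul_ne_zero hlam hDne hroot.symm
  have hfne : ∀ k, (z - a k) ≠ 0 := by
    intro k h
    exact hNne (prod_eq_zero (mem_univ k) h)
  have e1 : ∑ j, ∏ k ∈ univ.erase j, (z - a k)
      = (∏ k, (z - a k)) * ∑ j, (z - a j)⁻¹ := by
    rw [Finset.mul_sum]
    refine Finset.sum_congr rfl fun j _ => ?_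
    rw [← Finset.prod_erase_mul univ _ (mem_univ j), mul_assoc, mul_inv_cancel₀ (hfne j), mul_one]
  have e2 : ∑ j, (∏ k ∈ univ.erase j, (1 - (starRingEnd ℂ) (a k) * z)) * (starRingEnd ℂ) (a j)
      = (∏ k, (1 - (starRingEnd ℂ) (a k) * z)) * ∑ j, (starRingEnd ℂ) (a j) * (1 - (starRingEnd ℂ) (a j) * z)⁻¹ := by
    rw [Finset.mul_sum]
    refine Finset.sum_congr rfl fun j _ => ?_
    rw [← Finset.prod_erase_mul univ _ (mem_univ j), mul_assoc, mul_comm (1 - (starRingEnd ℂ) (a j) * z), mul_assoc, inv_mul_cancel₀ (hgne j), mul_one]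
  rw [e1, e2, ← mul_assoc, ← mul_assoc, ← hroot, ← mul_add]
  apply mul_ne_zero (mul_ne_zero he hNne)
  intro hS
  have hsum : z * (∑ j, (z - a j)⁻¹ + ∑ j, (starRingEnd ℂ) (a j) * (1 - (starRingEnd ℂ) (a j) * z)⁻¹)
      = ∑ j, (z / (z - a j) + (starRingEnd ℂ) (a j) * z / (1 - (starRingEnd ℂ) (a j) * z)) := by
    rw [mul_add, Finset.mul_sum, Finset.mul_sum, ← Finset.sum_add_distrib]
    refine Finset.sum_congr rfl fun j _ => ?_
    rw [div_eq_mul_inv, div_eq_mul_inv]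
    ring
  have hpos : 0 < (∑ j, (z / (z - a j) + (starRingEnd ℂ) (a j) * z / (1 - (starRingEnd ℂ) (a j) * z))).re := by
    rw [Complex.re_sum]
    exact Finset.sum_pos (fun j _ => term_re_pos z (a j) hz (ha j) (hfne j)) univ_nonempty
  rw [← hsum, hS, mul_zero] at hpos
  simp at hpos

theorem derivative_finset_prod {ι : Type*} [DecidableEq ι] (s : Finset ι) (f : ι → Polynomial ℂ) :
    Polynomial.derivative (∏ i ∈ s, f i)
      = ∑ i ∈ s, (∏ j ∈ s.erase i, f j) * Polynomial.derivative (f i) := by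
  rw [Finset.prod_eq_multiset_prod, derivative_prod, Finset.sum_eq_multiset_sum]
  apply congrArg
  apply Multiset.map_congr rfl
  intro i hi
  rw [Finset.prod_eq_multiset_prod, Finset.erase_val]

theorem blaschke_preimage_card (d : ℕ) (hd : 1 ≤ d) (θ : ℝ) (a : Fin d → ℂ)
    (ha : ∀ k, ‖a k‖ < 1)
    (B : ℂ → ℂ)
    (hB : ∀ z, B z = Complex.exp (θ * Complex.I) *
      ∏ k, (z - a k) / (1 - (starRingEnd ℂ) (a k) * z))
    (lam : ℂ) (hlam : ‖lam‖ = 1) :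
    ∃ s : Finset ℂ, s.card = d ∧ (∀ z, B z = lam ↔ z ∈ s) ∧
      ∀ z ∈ s, ‖z‖ = 1 := by
  set e : ℂ := Complex.exp (θ * Complex.I) with he_def
  have he : ‖e‖ = 1 := Complex.norm_exp_ofReal_mul_I θ
  have he0 : e ≠ 0 := by intro h; rw [h] at he; simp at he
  have hlam0 : lam ≠ 0 := by intro h; rw [h] at hlam; simp at hlam
  set N : Polynomial ℂ := Polynomial.C e * ∏ k, (Polynomial.X - Polynomial.C (a k)) with hN
  set Dp : Polynomial ℂ := ∏ k, (1 - Polynomial.C ((starRingEnd ℂ) (a k)) * Polynomial.X) with hDp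
  set P : Polynomial ℂ := N - Polynomial.C lam * Dp with hP
  have hPev : ∀ z, P.eval z = e * ∏ k, (z - a k) - lam * ∏ k, (1 - (starRingEnd ℂ) (a k) * z) := by
    intro z; simp [hP, hN, hDp, eval_prod]
  -- coefficient at d
  have hQc : (∏ k : Fin d, (Polynomial.X - Polynomial.C (a k))).coeff d = 1 := by
    have := coeff_prod_of_natDegree_le (s := (univ : Finset (Fin d)))
      (f := fun k => Polynomial.X - Polynomial.C (a k)) 1 (fun p _ => natDegree_X_sub_C_le _)
    simpa using this
  have hDc : Dp.coeff d = ∏ k, (-(starRingEnd ℂ) (a k)) := by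
    have := coeff_prod_of_natDegree_le (s := (univ : Finset (Fin d)))
      (f := fun k => 1 - Polynomial.C ((starRingEnd ℂ) (a k)) * Polynomial.X) 1 ?_
    · simpa [hDp, Polynomial.coeff_one] using this
    · intro p _
      apply le_trans (natDegree_sub_le _ _)
      simp [natDegree_C_mul_le]
      exact natDegree_C_mul_le _ _ |>.trans (by simp)
  have hPc : P.coeff d = e - lam * ∏ k, (-(starRingEnd ℂ) (a k)) := by
    simp [hP, hN, coeff_C_mul, hQc, hDc]
  have habs_prod : ‖lam * ∏ k, (-(starRingEnd ℂ) (a k))‖ < 1 := by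
    rw [norm_mul, hlam, one_mul, norm_prod]
    have hk0 : (⟨0, hd⟩ : Fin d) ∈ (univ : Finset (Fin d)) := mem_univ _
    calc ∏ k, ‖-(starRingEnd ℂ) (a k)‖
        = ‖-(starRingEnd ℂ) (a ⟨0, hd⟩)‖ * ∏ k ∈ univ.erase ⟨0, hd⟩, ‖-(starRingEnd ℂ) (a k)‖ :=
          (Finset.mul_prod_erase univ _ hk0).symm
      _ ≤ ‖-(starRingEnd ℂ) (a ⟨0, hd⟩)‖ * 1 := by
          apply mul_le_mul_of_nonneg_left _ (norm_nonneg _)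
          apply Finset.prod_le_one (fun k _ => norm_nonneg _)
          intro k _
          rw [norm_neg, Complex.norm_conj]
          exact le_of_lt (ha k)
      _ < 1 := by rw [mul_one, norm_neg, Complex.norm_conj]; exact ha _
  have hPcne : P.coeff d ≠ 0 := by
    rw [hPc, sub_ne_zero]
    intro h
    rw [← h] at habs_prod
    rw [he] at habs_prod
    exact lt_irrefl 1 habs_prod
  have hPne : P ≠ 0 := fun h => hPcne (by rw [h]; simp)
  have hdegle : P.natDegree ≤ d := by
    apply le_trans (natDegree_sub_le _ _)
    apply max_le
    · apply le_trans (natDegree_C_mul_le _ _)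
      apply le_trans (natDegree_prod_le _ _)
      apply le_trans (Finset.sum_le_card_nsmul _ _ 1 (fun k _ => natDegree_X_sub_C_le _))
      simp
    · apply le_trans (natDegree_C_mul_le _ _)
      apply le_trans (natDegree_prod_le _ _)
      refine le_trans (Finset.sum_le_card_nsmul _ _ 1 ?_) (by simp)
      intro k _
      apply le_trans (natDegree_sub_le _ _)
      simp [natDegree_C_mul_le]
      exact natDegree_C_mul_le _ _ |>.trans (by simp)
  have hdeg : P.natDegree = d := le_antisymm hdegle (le_natDegree_of_ne_zero hPcne)
  -- roots
  have hcard : Multiset.card P.roots = d := by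
    rw [← hdeg]
    exact (Polynomial.splits_iff_card_roots.mp (IsAlgClosed.splits P))
  -- derivative evaluation
  have hDeval : ∀ z : ℂ, Polynomial.eval z (Polynomial.derivative P)
      = e * ∑ j, ∏ k ∈ univ.erase j, (z - a k)
        + lam * ∑ j, (∏ k ∈ univ.erase j, (1 - (starRingEnd ℂ) (a k) * z)) * (starRingEnd ℂ) (a j) := by
    intro z
    have h1 : Polynomial.derivative (∏ k : Fin d, (Polynomial.X - Polynomial.C (a k)))
        = ∑ j : Fin d, ∏ k ∈ univ.erase j, (Polynomial.X - Polynomial.C (a k)) := by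
      rw [derivative_finset_prod]
      refine Finset.sum_congr rfl fun j _ => ?_
      simp
    have h2 : Polynomial.derivative (∏ k : Fin d, (1 - Polynomial.C ((starRingEnd ℂ) (a k)) * Polynomial.X))
        = ∑ j : Fin d, (∏ k ∈ univ.erase j, (1 - Polynomial.C ((starRingEnd ℂ) (a k)) * Polynomial.X))
          * (-Polynomial.C ((starRingEnd ℂ) (a j))) := by
      rw [derivative_finset_prod]
      refine Finset.sum_congr rfl fun j _ => ?_
      simp
    rw [hP, hN, hDp, derivative_sub, derivative_C_mul, derivative_C_mul, h1, h2]
    simp only [eval_sub, eval_mul, eval_finset_sum, eval_prod, eval_X, eval_C, eval_neg, eval_one,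
      mul_neg, Finset.sum_neg_distrib]
    ring
  -- every root is on the circle
  have hroot_circle : ∀ z : ℂ, P.eval z = 0 → ‖z‖ = 1 := by
    intro z hz
    rw [hPev] at hz
    exact root_abs_one d hd a ha e lam z he hlam (sub_eq_zero.mp hz)
  -- nodup
  have hnodup : P.roots.Nodup := by
    rw [Multiset.nodup_iff_count_le_one]
    intro z
    rw [Polynomial.count_roots]
    by_contra hcount
    push_neg at hcount
    have h0 : P.IsRoot z := by
      have := Polynomial.isRoot_iterate_derivative_of_lt_rootMultiplicity (p := P) (t := z) (n := 0)
        (by omega)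
      simpa using this
    have h1 : (Polynomial.derivative P).IsRoot z := by
      have := Polynomial.isRoot_iterate_derivative_of_lt_rootMultiplicity (p := P) (t := z) (n := 1)
        (by omega)
      simpa using this
    have hz1 : ‖z‖ = 1 := hroot_circle z h0
    have hrooteq : e * ∏ k, (z - a k) = lam * ∏ k, (1 - (starRingEnd ℂ) (a k) * z) := by
      have := h0
      rw [Polynomial.IsRoot, hPev] at this
      exact sub_eq_zero.mp this
    have := key_sum_ne d hd a ha e lam z he0 hlam0 hz1 hrooteq
    rw [Polynomial.IsRoot, hDeval] at h1
    exact this h1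
  refine ⟨P.roots.toFinset, ?_, ?_, ?_⟩
  · rw [Multiset.toFinset_card_of_nodup hnodup, hcard]
  · intro z
    rw [Multiset.mem_toFinset, Polynomial.mem_roots hPne]
    constructor
    · intro hb
      by_cases hg : ∀ k, 1 - (starRingEnd ℂ) (a k) * z ≠ 0
      · have hDproj : (∏ k, (1 - (starRingEnd ℂ) (a k) * z)) ≠ 0 :=
          prod_ne_zero_iff.mpr fun k _ => hg k
        rw [hB, Finset.prod_div_distrib] at hb
        rw [Polynomial.IsRoot, hPev, sub_eq_zero]
        field_simp at hb
        simp_rw [mul_comm z] at hb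
        rwa [div_eq_iff hDproj] at hb
      · push_neg at hg
        obtain ⟨k0, hk0⟩ := hg
        exfalso
        rw [hB] at hb
        rw [Finset.prod_eq_zero (mem_univ k0) (by rw [hk0, div_zero]), mul_zero] at hb
        exact hlam0 hb.symm
    · intro hr
      rw [Polynomial.IsRoot, hPev] at hr
      have hrooteq : e * ∏ k, (z - a k) = lam * ∏ k, (1 - (starRingEnd ℂ) (a k) * z) :=
        sub_eq_zero.mp hr
      have hz1 : ‖z‖ = 1 := root_abs_one d hd a ha e lam z he hlam hrooteq
      have hg : ∀ k, 1 - (starRingEnd ℂ) (a k) * z ≠ 0 := fun k => gne_aux z (a k) hz1 (ha k)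
      have hDproj : (∏ k, (1 - (starRingEnd ℂ) (a k) * z)) ≠ 0 :=
        prod_ne_zero_iff.mpr fun k _ => hg k
      rw [hB, Finset.prod_div_distrib, ← mul_div_assoc, div_eq_iff hDproj]
      exact hrooteq
  · intro z hz
    rw [Multiset.mem_toFinset, Polynomial.mem_roots hPne] at hz
    exact hroot_circle z hz
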